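/- Let |+⟩ = (|0⟩+|1⟩)/√2 and let V : ℂ² → (ℂ²)^⊗4 be the isometry defined by V|0⟩ = |0⟩⊗|+⟩⊗|0⟩⊗|0⟩ and V|1⟩ = (|1⟩⊗|0⟩⊗|1⟩⊗|0⟩ + |1⟩⊗|1⟩⊗|1⟩⊗|1⟩)/√2. Let A be the first two qubits. Then for every density matrix ρ on ℂ² with diagonal entries ρ₀₀ and ρ₁₁: (i) Tr_{3,4}(V ρ V†) = ρ₀₀ |0⟩⟨0|⊗|+⟩⟨+| + ρ₁₁ |1⟩⟨1|⊗(I₂/2); and (ii) S(Tr_{3,4}(V ρ V†)) = -ρ₀₀ log₂ ρ₀₀ - ρ₁₁ log₂ ρ₁₁ + ρ₁₁. (This is the Ryu–Takayanagi formula S_A = S_c + Tr(ρL) with area operator L = |1⟩⟨1|.) -/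

import Mathlib

open Matrix Kronecker
open scoped ComplexOrder

/-- Partial trace over the second (right) tensor factor. -/
noncomputable def ptraceRight {ιA ιB : Type*} [Fintype ιB]
    (ρ : Matrix (ιA × ιB) (ιA × ιB) ℂ) : Matrix ιA ιA ℂ :=
  Matrix.of fun x y => ∑ j : ιB, ρ (x, j) (y, j)

/-- The von Neumann entropy (base 2) of a (Hermitian) matrix, computed from its
eigenvalues (with the convention `0 · log₂ 0 = 0`). -/
noncomputable def vnEntropy {ι : Type*} [Fintype ι] [DecidableEq ι]
    (ρ : Matrix ι ι ℂ) : ℝ :=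
  letI : Decidable ρ.IsHermitian := Classical.propDecidable _
  if h : ρ.IsHermitian then -∑ i, h.eigenvalues i * Real.logb 2 (h.eigenvalues i) else 0

/-- The isometry `V|0⟩ = |0⟩⊗|+⟩⊗|0⟩⊗|0⟩`,
`V|1⟩ = (|1⟩⊗|0⟩⊗|1⟩⊗|0⟩ + |1⟩⊗|1⟩⊗|1⟩⊗|1⟩)/√2`, from one qubit into four qubits,
grouped as `((q₁,q₂),(q₃,q₄))` with `A` the first two qubits. -/
noncomputable def V14 : Matrix ((Fin 2 × Fin 2) × (Fin 2 × Fin 2)) (Fin 2) ℂ :=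
  Matrix.of fun q l =>
    if l = 0 then
      (if q.1.1 = 0 ∧ q.2.1 = 0 ∧ q.2.2 = 0 then (((Real.sqrt 2 : ℝ) : ℂ))⁻¹ else 0)
    else
      (if q.1.1 = 1 ∧ q.2.1 = 1 ∧ q.1.2 = q.2.2 then (((Real.sqrt 2 : ℝ) : ℂ))⁻¹ else 0)

open Polynomial in
lemma charpoly_diag_RT {n : Type*} [Fintype n] [DecidableEq n] (d : n → ℂ) :
    (Matrix.diagonal d).charpoly = ∏ i, (X - C (d i)) := by
  rw [Matrix.charpoly, ← Matrix.det_diagonal]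
  congr 1
  ext i j
  by_cases h : i = j
  · subst h; simp
  · simp [Matrix.charmatrix_apply_ne _ _ _ h, Matrix.diagonal_apply_ne _ h]

open Polynomial in
lemma charpoly_unitary_conj_RT {n : Type*} [Fintype n] [DecidableEq n]
    (U A : Matrix n n ℂ) (h1 : U * Uᴴ = 1) :
    (U * A * Uᴴ).charpoly = A.charpoly := by
  have hsc : ∀ B : Matrix n n ℂ[X], B * Matrix.scalar n (X : ℂ[X]) =
      Matrix.scalar n (X : ℂ[X]) * B :=
    fun B => ((Matrix.scalar_commute (X : ℂ[X]) (fun r' => Commute.all _ _) B).eq).symm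
  have key : charmatrix (U * A * Uᴴ) =
      (U.map C) * charmatrix A * (Uᴴ.map C) := by
    rw [charmatrix, charmatrix]
    rw [Matrix.mul_sub, Matrix.sub_mul]
    congr 1
    · rw [mul_assoc, ← hsc, ← mul_assoc, ← Matrix.map_mul, h1]
      simp
    · simp only [RingHom.mapMatrix_apply]
      rw [← Matrix.map_mul, ← Matrix.map_mul]
  rw [Matrix.charpoly, key, Matrix.det_mul, Matrix.det_mul, Matrix.charpoly,
    mul_comm, ← mul_assoc, ← Matrix.det_mul, ← Matrix.map_mul,
    mul_eq_one_comm.mp h1]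
  simp

open Polynomial in
set_option maxHeartbeats 1000000 in
lemma vnEntropy_aux_RT (a b : ℝ) :
    vnEntropy ((a:ℂ) • ((!![1, 0; 0, 0] : Matrix (Fin 2) (Fin 2) ℂ) ⊗ₖ
          (!![1/2, 1/2; 1/2, 1/2] : Matrix (Fin 2) (Fin 2) ℂ)) +
        (b:ℂ) • ((!![0, 0; 0, 1] : Matrix (Fin 2) (Fin 2) ℂ) ⊗ₖ
          (!![1/2, 0; 0, 1/2] : Matrix (Fin 2) (Fin 2) ℂ))) =
      -a * Real.logb 2 a - b * Real.logb 2 b + b := by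
  set σ : Matrix (Fin 2 × Fin 2) (Fin 2 × Fin 2) ℂ :=
    (a:ℂ) • ((!![1, 0; 0, 0] : Matrix (Fin 2) (Fin 2) ℂ) ⊗ₖ
          (!![1/2, 1/2; 1/2, 1/2] : Matrix (Fin 2) (Fin 2) ℂ)) +
        (b:ℂ) • ((!![0, 0; 0, 1] : Matrix (Fin 2) (Fin 2) ℂ) ⊗ₖ
          (!![1/2, 0; 0, 1/2] : Matrix (Fin 2) (Fin 2) ℂ)) with hσdef
  have hs2 : (((Real.sqrt 2 : ℝ) : ℂ))⁻¹ ^ 2 = 1/2 := by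
    have h : (((Real.sqrt 2 : ℝ) : ℂ)) ^ 2 = 2 := by
      norm_cast
      rw [sq, Real.mul_self_sqrt (by norm_num)]
    rw [inv_pow, h]
    norm_num
  have hsstar : star (((Real.sqrt 2 : ℝ) : ℂ))⁻¹ = (((Real.sqrt 2 : ℝ) : ℂ))⁻¹ := by
    rw [← Complex.ofReal_inv]
    exact Complex.conj_ofReal _
  set W : Matrix (Fin 2 × Fin 2) (Fin 2 × Fin 2) ℂ :=
    Matrix.of (fun x y => if x.1 = y.1 then
      (if x.2 = 1 ∧ y.2 = 1 then -(((Real.sqrt 2 : ℝ) : ℂ))⁻¹ else (((Real.sqrt 2 : ℝ) : ℂ))⁻¹)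
      else 0) with hW
  set d : Fin 2 × Fin 2 → ℝ := fun p =>
    if p.1 = 0 then (if p.2 = 0 then a else 0) else b/2 with hd
  have hW1 : W * Wᴴ = 1 := by
    ext ⟨x1, x2⟩ ⟨y1, y2⟩
    fin_cases x1 <;> fin_cases x2 <;> fin_cases y1 <;> fin_cases y2 <;>
      simp [hW, Matrix.mul_apply, Fintype.sum_prod_type, Fin.sum_univ_two,
        Matrix.conjTranspose_apply, hsstar, Matrix.one_apply, Prod.ext_iff] <;>
      ring_nf <;> simp [← sq, hs2]
  have hσW : σ = W * Matrix.diagonal (fun p => ((d p : ℝ) : ℂ)) * Wᴴ := by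
    ext ⟨x1, x2⟩ ⟨y1, y2⟩
    fin_cases x1 <;> fin_cases x2 <;> fin_cases y1 <;> fin_cases y2 <;>
      simp [hσdef, hW, hd, Matrix.mul_apply, Fintype.sum_prod_type, Fin.sum_univ_two,
        Matrix.conjTranspose_apply, hsstar, Matrix.kroneckerMap_apply,
        Matrix.diagonal_apply, Prod.ext_iff] <;>
      ring_nf <;> simp [← sq, hs2]
  have hdiagherm : (Matrix.diagonal (fun p : Fin 2 × Fin 2 => ((d p : ℝ) : ℂ))).IsHermitian := by
    have hst : (star fun p : Fin 2 × Fin 2 => ((d p : ℝ) : ℂ)) =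
        fun p : Fin 2 × Fin 2 => ((d p : ℝ) : ℂ) := by
      funext p
      show star ((d p : ℝ) : ℂ) = ((d p : ℝ) : ℂ)
      exact Complex.conj_ofReal _
    rw [Matrix.IsHermitian, Matrix.diagonal_conjTranspose, hst]
  have hherm : σ.IsHermitian := by
    rw [hσW]
    exact Matrix.isHermitian_mul_mul_conjTranspose W hdiagherm
  have hcp1 : σ.charpoly = ∏ i, (X - C ((d i : ℂ))) := by
    rw [hσW, charpoly_unitary_conj_RT _ _ hW1, charpoly_diag_RT]
  have hU1 : (hherm.eigenvectorUnitary : Matrix (Fin 2 × Fin 2) (Fin 2 × Fin 2) ℂ) *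
      (hherm.eigenvectorUnitary : Matrix (Fin 2 × Fin 2) (Fin 2 × Fin 2) ℂ)ᴴ = 1 := by
    rw [← Matrix.star_eq_conjTranspose]
    exact Matrix.mem_unitaryGroup_iff.mp hherm.eigenvectorUnitary.2
  have hcp2 : σ.charpoly = ∏ i, (X - C ((hherm.eigenvalues i : ℂ))) := by
    conv_lhs => rw [hherm.spectral_theorem, Unitary.conjStarAlgAut_apply, Matrix.star_eq_conjTranspose]
    rw [charpoly_unitary_conj_RT _ _ hU1, charpoly_diag_RT]
    rfl
  have prodeq : ∀ f : Fin 2 × Fin 2 → ℂ, (∏ i, (X - C (f i))) =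
      ((Finset.univ.val.map f).map (fun c => X - C c)).prod := by
    intro f
    rw [Multiset.map_map, Finset.prod_eq_multiset_prod]
    rfl
  have hmulC : Multiset.map (fun i => ((hherm.eigenvalues i : ℂ))) Finset.univ.val =
      Multiset.map (fun i => ((d i : ℂ))) Finset.univ.val := by
    have h := congrArg Polynomial.roots (hcp2.symm.trans hcp1)
    rwa [prodeq, prodeq, roots_multiset_prod_X_sub_C, roots_multiset_prod_X_sub_C] at h
  have hmulR : Multiset.map hherm.eigenvalues Finset.univ.val =
      Multiset.map d Finset.univ.val := by
    apply Multiset.map_injective Complex.ofReal_injective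
    rw [Multiset.map_map, Multiset.map_map]
    exact hmulC
  have hsum : ∀ g : ℝ → ℝ, ∑ i, g (hherm.eigenvalues i) = ∑ i, g (d i) := by
    intro g
    have e : ∀ f : Fin 2 × Fin 2 → ℝ, (∑ i, g (f i)) =
        ((Finset.univ.val.map f).map g).sum := by
      intro f
      rw [Multiset.map_map, Finset.sum_eq_multiset_sum]
      rfl
    rw [e, e, hmulR]
  rw [vnEntropy]
  rw [dif_pos hherm]
  rw [hsum (fun x => x * Real.logb 2 x)]
  rw [hd]
  rw [Fintype.sum_prod_type, Fin.sum_univ_two, Fin.sum_univ_two, Fin.sum_univ_two]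
  norm_num
  by_cases hb : b = 0
  · simp [hb]
  · have hlb : Real.logb 2 (b/2) = Real.logb 2 b - 1 := by
      rw [Real.logb_div hb (by norm_num), Real.logb_self_eq_one (by norm_num)]
    rw [hlb]
    ring

/-- a Ryu–Takayanagi formula `S_A = S_c + Tr(ρL)` with area operator
`L = |1⟩⟨1|`: for every density matrix `ρ` on `ℂ²` with diagonal entries `ρ₀₀`, `ρ₁₁`:
(i) `Tr_{3,4}(VρV†) = ρ₀₀ |0⟩⟨0|⊗|+⟩⟨+| + ρ₁₁ |1⟩⟨1|⊗(I₂/2)`; and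
(ii) `S(Tr_{3,4}(VρV†)) = -ρ₀₀ log₂ ρ₀₀ - ρ₁₁ log₂ ρ₁₁ + ρ₁₁`. -/
theorem RT_formula_classical_plus_area (ρ : Matrix (Fin 2) (Fin 2) ℂ)
    (hρ : ρ.PosSemidef) (hρtr : ρ.trace = 1) :
    ptraceRight (V14 * ρ * V14ᴴ) =
      ρ 0 0 • ((!![1, 0; 0, 0] : Matrix (Fin 2) (Fin 2) ℂ) ⊗ₖ
          (!![1/2, 1/2; 1/2, 1/2] : Matrix (Fin 2) (Fin 2) ℂ)) +
        ρ 1 1 • ((!![0, 0; 0, 1] : Matrix (Fin 2) (Fin 2) ℂ) ⊗ₖ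
          (!![1/2, 0; 0, 1/2] : Matrix (Fin 2) (Fin 2) ℂ)) ∧
    vnEntropy (ptraceRight (V14 * ρ * V14ᴴ)) =
      -(ρ 0 0).re * Real.logb 2 (ρ 0 0).re - (ρ 1 1).re * Real.logb 2 (ρ 1 1).re
        + (ρ 1 1).re := by
  have h2 : (((Real.sqrt 2 : ℝ) : ℂ))⁻¹ ^ 2 = 1/2 := by
    have h : (((Real.sqrt 2 : ℝ) : ℂ)) ^ 2 = 2 := by
      norm_cast
      rw [sq, Real.mul_self_sqrt (by norm_num)]
    rw [inv_pow, h]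
    norm_num
  have hpt : ptraceRight (V14 * ρ * V14ᴴ) =
      ρ 0 0 • ((!![1, 0; 0, 0] : Matrix (Fin 2) (Fin 2) ℂ) ⊗ₖ
          (!![1/2, 1/2; 1/2, 1/2] : Matrix (Fin 2) (Fin 2) ℂ)) +
        ρ 1 1 • ((!![0, 0; 0, 1] : Matrix (Fin 2) (Fin 2) ℂ) ⊗ₖ
          (!![1/2, 0; 0, 1/2] : Matrix (Fin 2) (Fin 2) ℂ)) := by
    ext ⟨x1, x2⟩ ⟨y1, y2⟩
    fin_cases x1 <;> fin_cases x2 <;> fin_cases y1 <;> fin_cases y2 <;>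
      simp [ptraceRight, V14, Matrix.mul_apply, Fintype.sum_prod_type, Fin.sum_univ_two,
        Matrix.kroneckerMap_apply, Matrix.conjTranspose_apply] <;>
      ring_nf <;>
      simp [h2] <;> ring
  have h00 : ρ 0 0 = (((ρ 0 0).re : ℝ) : ℂ) := by
    have h := hρ.1.apply 0 0
    exact (Complex.conj_eq_iff_re.mp h).symm
  have h11 : ρ 1 1 = (((ρ 1 1).re : ℝ) : ℂ) := by
    have h := hρ.1.apply 1 1
    exact (Complex.conj_eq_iff_re.mp h).symm
  refine ⟨hpt, ?_⟩
  conv_lhs => rw [hpt, h00, h11]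
  exact vnEntropy_aux_RT (ρ 0 0).re (ρ 1 1).re
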